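/- The function v(x) = |x|^{(p+2)/(p+1)} on B_1(0) ⊂ R^N (p > 0) is of class C^{1,1/(p+1)} but, for every ε ∈ (0,1), v is not of class C^{1, 1/(p+1)+ε} in any neighborhood of the origin. -/

import Mathlib

open Metric Real Asymptotics


variable {E : Type*} [NormedAddCommGroup E] [InnerProductSpace ℝ E] [CompleteSpace E]

lemma gradA {α : ℝ} (hα : 1 < α) {x : E} (hx : x ≠ 0) :
    HasGradientAt (fun y : E => ‖y‖ ^ α) ((α * ‖x‖ ^ (α - 2)) • x) x := by
  have hnx : (0:ℝ) < ‖x‖ := norm_pos_iff.mpr hx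
  have h1 : HasFDerivAt (fun y : E => ‖y‖ ^ 2) (2 • (innerSL ℝ) x) x :=
    (hasStrictFDerivAt_norm_sq x).hasFDerivAt
  have h2 : HasDerivAt (fun t : ℝ => t ^ (α/2)) ((α/2) * (‖x‖^2) ^ (α/2 - 1)) (‖x‖^2) :=
    hasDerivAt_rpow_const (Or.inl (by positivity))
  have h3 := h2.comp_hasFDerivAt x h1
  rw [hasGradientAt_iff_hasFDerivAt]
  have hfun : (fun y : E => ‖y‖ ^ α) = fun y : E => (‖y‖^2) ^ (α/2) := by
    funext y
    rw [← Real.rpow_natCast ‖y‖ 2, ← Real.rpow_mul (norm_nonneg y)]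
    congr 1; ring
  rw [hfun]
  refine h3.congr_fderiv (Eq.symm ?_)
  ext z
  simp only [ContinuousLinearMap.smul_apply, ContinuousLinearMap.smul_apply, innerSL_apply_apply,
    smul_eq_mul]
  have : (InnerProductSpace.toDual ℝ E) ((α * ‖x‖ ^ (α - 2)) • x) z
      = (α * ‖x‖ ^ (α - 2)) * inner ℝ x z := by
    simp [InnerProductSpace.toDual_apply_apply, real_inner_smul_left]
  rw [this]
  have hsq : (‖x‖^2 : ℝ) ^ (α/2 - 1) = ‖x‖ ^ (α - 2) := by
    rw [← Real.rpow_natCast ‖x‖ 2, ← Real.rpow_mul (norm_nonneg x)]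
    congr 1; ring
  rw [hsq]
  simp only [two_smul, ContinuousLinearMap.add_apply, innerSL_apply_apply]
  ring


lemma gradB {α : ℝ} (hα : 1 < α) :
    HasGradientAt (fun y : E => ‖y‖ ^ α) 0 (0 : E) := by
  rw [hasGradientAt_iff_hasFDerivAt, hasFDerivAt_iff_isLittleO_nhds_zero]
  simp only [zero_add, norm_zero, map_zero, ContinuousLinearMap.zero_apply, sub_zero,
    Real.zero_rpow (by positivity : α ≠ 0)]
  rw [isLittleO_iff]
  intro c hc
  have hr : (0:ℝ) < c ^ (1/(α-1)) := rpow_pos_of_pos hc _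
  rw [Metric.eventually_nhds_iff]
  refine ⟨c ^ (1/(α-1)), hr, fun {y} hy => ?_⟩
  rw [dist_zero_right] at hy
  rcases eq_or_ne y 0 with rfl | hy0
  · simp [Real.zero_rpow (by positivity : α ≠ 0)]
  · have hny : (0:ℝ) < ‖y‖ := norm_pos_iff.mpr hy0
    have heq : ‖y‖ ^ α = ‖y‖ ^ (α-1) * ‖y‖ := by
      rw [← Real.rpow_add_one (ne_of_gt hny)]; ring_nf
    rw [Real.norm_rpow_of_nonneg (norm_nonneg y), norm_norm, heq]
    gcongr
    calc ‖y‖ ^ (α-1) ≤ (c ^ (1/(α-1))) ^ (α-1) :=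
          rpow_le_rpow (norm_nonneg y) hy.le (by linarith)
      _ = c := by
          rw [← Real.rpow_mul hc.le, one_div,
            inv_mul_cancel₀ (by linarith : α - 1 ≠ 0), Real.rpow_one]

lemma holder_key {β : ℝ} (hβ0 : 0 < β) (hβ1 : β ≤ 1) (x y : E) (hxy : ‖y‖ ≤ ‖x‖) :
    ‖(‖x‖ ^ (β-1)) • x - (‖y‖ ^ (β-1)) • y‖ ≤ 2 * ‖x - y‖ ^ β := by
  rcases eq_or_ne x 0 with rfl | hx0
  · have hy : y = 0 := by simpa [norm_le_zero_iff] using hxy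
    simp [hy]
    positivity
  have hnx : (0:ℝ) < ‖x‖ := norm_pos_iff.mpr hx0
  rcases eq_or_ne x y with rfl | hne
  · simp
    positivity
  have hd : (0:ℝ) < ‖x - y‖ := by rwa [norm_pos_iff, sub_ne_zero]
  have hxb : ‖x‖ ^ β = ‖x‖ ^ (β-1) * ‖x‖ := by
    rw [← Real.rpow_add_one (ne_of_gt hnx)]; ring_nf
  rcases le_or_gt ‖x - y‖ ‖x‖ with hcase | hcase
  · -- ‖x-y‖ ≤ ‖x‖
    have key : ‖x‖ ^ (β-1) * ‖x - y‖ ≤ ‖x - y‖ ^ β := by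
      have h1 : ‖x‖ ^ (β-1) ≤ ‖x - y‖ ^ (β-1) :=
        Real.rpow_le_rpow_of_nonpos hd hcase (by linarith)
      calc ‖x‖ ^ (β-1) * ‖x - y‖ ≤ ‖x - y‖ ^ (β-1) * ‖x - y‖ := by gcongr
        _ = ‖x - y‖ ^ β := by rw [← Real.rpow_add_one (ne_of_gt hd)]; ring_nf
    have decomp : (‖x‖ ^ (β-1)) • x - (‖y‖ ^ (β-1)) • y
        = (‖x‖ ^ (β-1)) • (x - y) + (‖x‖ ^ (β-1) - ‖y‖ ^ (β-1)) • y := by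
      module
    have t1 : ‖(‖x‖ ^ (β-1)) • (x - y)‖ ≤ ‖x - y‖ ^ β := by
      rw [norm_smul, Real.norm_eq_abs, abs_of_pos (rpow_pos_of_pos hnx _)]
      exact key
    have t2 : ‖(‖x‖ ^ (β-1) - ‖y‖ ^ (β-1)) • y‖ ≤ ‖x - y‖ ^ β := by
      rcases eq_or_ne y 0 with rfl | hy0
      · simp
        positivity
      have hny : (0:ℝ) < ‖y‖ := norm_pos_iff.mpr hy0
      rw [norm_smul, Real.norm_eq_abs]
      have hmono : ‖x‖ ^ (β-1) ≤ ‖y‖ ^ (β-1) :=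
        Real.rpow_le_rpow_of_nonpos hny hxy (by linarith)
      rw [abs_of_nonpos (by linarith), neg_sub]
      have hyb : ‖y‖ ^ β = ‖y‖ ^ (β-1) * ‖y‖ := by
        rw [← Real.rpow_add_one (ne_of_gt hny)]; ring_nf
      have step : (‖y‖ ^ (β-1) - ‖x‖ ^ (β-1)) * ‖y‖ = ‖y‖ ^ β - ‖x‖ ^ (β-1) * ‖y‖ := by
        rw [hyb]; ring
      rw [step]
      have hxyβ : ‖y‖ ^ β ≤ ‖x‖ ^ β := Real.rpow_le_rpow (norm_nonneg y) hxy hβ0.le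
      rw [hxb] at hxyβ
      have hA : (0:ℝ) ≤ ‖x‖ ^ (β-1) := (rpow_pos_of_pos hnx _).le
      have hsub : ‖x‖ - ‖y‖ ≤ ‖x - y‖ := norm_sub_norm_le x y
      nlinarith [key]
    calc ‖(‖x‖ ^ (β-1)) • x - (‖y‖ ^ (β-1)) • y‖
        = ‖(‖x‖ ^ (β-1)) • (x - y) + (‖x‖ ^ (β-1) - ‖y‖ ^ (β-1)) • y‖ := by rw [decomp]
      _ ≤ ‖(‖x‖ ^ (β-1)) • (x - y)‖ + ‖(‖x‖ ^ (β-1) - ‖y‖ ^ (β-1)) • y‖ := norm_add_le _ _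
      _ ≤ ‖x - y‖ ^ β + ‖x - y‖ ^ β := add_le_add t1 t2
      _ = 2 * ‖x - y‖ ^ β := by ring
  · -- ‖x‖ < ‖x-y‖
    have hbx : ‖(‖x‖ ^ (β-1)) • x‖ = ‖x‖ ^ β := by
      rw [norm_smul, Real.norm_eq_abs, abs_of_pos (rpow_pos_of_pos hnx _), ← hxb]
    have hby : ‖(‖y‖ ^ (β-1)) • y‖ ≤ ‖x‖ ^ β := by
      rcases eq_or_ne y 0 with rfl | hy0
      · simp
        positivity
      have hny : (0:ℝ) < ‖y‖ := norm_pos_iff.mpr hy0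
      rw [norm_smul, Real.norm_eq_abs, abs_of_pos (rpow_pos_of_pos hny _),
        ← Real.rpow_add_one (ne_of_gt hny)]
      have h : β - 1 + 1 = β := by ring
      rw [h]
      exact Real.rpow_le_rpow (norm_nonneg y) hxy hβ0.le
    calc ‖(‖x‖ ^ (β-1)) • x - (‖y‖ ^ (β-1)) • y‖
        ≤ ‖(‖x‖ ^ (β-1)) • x‖ + ‖(‖y‖ ^ (β-1)) • y‖ := norm_sub_le _ _
      _ ≤ ‖x‖ ^ β + ‖x‖ ^ β := by rw [hbx]; exact add_le_add le_rfl hby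
      _ ≤ ‖x - y‖ ^ β + ‖x - y‖ ^ β := by
          have := Real.rpow_le_rpow (norm_nonneg x) hcase.le hβ0.le
          linarith
      _ = 2 * ‖x - y‖ ^ β := by ring

/-- v(x) = |x|^((p+2)/(p+1)) on B₁(0) ⊂ ℝ^N (p > 0) is C^{1,1/(p+1)}, but for each
ε ∈ (0,1) it is not C^{1,1/(p+1)+ε} in any neighborhood of the origin. -/
theorem stmt2 {N : ℕ} (hN : 1 ≤ N) (p : ℝ) (hp : 0 < p)
    (v : EuclideanSpace ℝ (Fin N) → ℝ)
    (hv : v = fun x => ‖x‖ ^ ((p + 2) / (p + 1))) :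
    (DifferentiableOn ℝ v (Metric.ball (0 : EuclideanSpace ℝ (Fin N)) 1)) ∧
    (∃ C : ℝ, ∀ x ∈ Metric.ball (0 : EuclideanSpace ℝ (Fin N)) 1,
      ∀ y ∈ Metric.ball (0 : EuclideanSpace ℝ (Fin N)) 1,
        ‖gradient v x - gradient v y‖ ≤ C * ‖x - y‖ ^ (1 / (p + 1))) ∧
    (∀ ε ∈ Set.Ioo (0 : ℝ) 1, ∀ δ > (0 : ℝ),
      ¬ ∃ C : ℝ, ∀ x ∈ Metric.ball (0 : EuclideanSpace ℝ (Fin N)) δ,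
        ∀ y ∈ Metric.ball (0 : EuclideanSpace ℝ (Fin N)) δ,
          ‖gradient v x - gradient v y‖ ≤ C * ‖x - y‖ ^ (1 / (p + 1) + ε)) := by
  have hp1 : (0:ℝ) < p + 1 := by linarith
  set β := 1 / (p+1) with hβdef
  have hβ0 : 0 < β := by positivity
  have hβ1 : β < 1 := by rw [hβdef, div_lt_one hp1]; linarith
  set α := β + 1 with hαdef
  have hα1 : 1 < α := by rw [hαdef]; linarith
  have hα0 : 0 < α := by linarith
  have hexp : (p+2)/(p+1) = α := by rw [hαdef, hβdef]; field_simp; ring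
  rw [hexp] at hv
  have hgrad : ∀ x : EuclideanSpace ℝ (Fin N),
      HasGradientAt v ((α * ‖x‖ ^ (β-1)) • x) x := by
    intro x
    rcases eq_or_ne x 0 with rfl | hx0
    · simpa [hv, Real.zero_rpow (show β - 1 ≠ 0 by linarith)] using
        gradB (E := EuclideanSpace ℝ (Fin N)) hα1
    · have := gradA (E := EuclideanSpace ℝ (Fin N)) hα1 hx0
      rw [hv]
      convert this using 3
      rw [hαdef]; ring
  have hgeq : ∀ x, gradient v x = (α * ‖x‖ ^ (β-1)) • x := fun x => (hgrad x).gradient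
  refine ⟨fun x _ => (hgrad x).differentiableAt.differentiableWithinAt, ⟨2*α, ?_⟩, ?_⟩
  · -- Hölder bound
    have main : ∀ a b : EuclideanSpace ℝ (Fin N), ‖b‖ ≤ ‖a‖ →
        ‖(α * ‖a‖ ^ (β-1)) • a - (α * ‖b‖ ^ (β-1)) • b‖ ≤ 2*α * ‖a-b‖ ^ β := by
      intro a b hab
      have h := holder_key hβ0 hβ1.le a b hab
      have heq : (α * ‖a‖ ^ (β-1)) • a - (α * ‖b‖ ^ (β-1)) • b
          = α • ((‖a‖ ^ (β-1)) • a - (‖b‖ ^ (β-1)) • b) := by module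
      rw [heq, norm_smul, Real.norm_eq_abs, abs_of_pos hα0]
      calc α * ‖(‖a‖ ^ (β-1)) • a - (‖b‖ ^ (β-1)) • b‖ ≤ α * (2 * ‖a-b‖ ^ β) := by gcongr
        _ = 2*α * ‖a-b‖ ^ β := by ring
    intro x _ y _
    rw [hgeq, hgeq]
    rcases le_total ‖y‖ ‖x‖ with h | h
    · exact main x y h
    · rw [norm_sub_rev, norm_sub_rev x y]
      exact main y x h
  · -- not better Hölder
    rintro ε ⟨hε0, hε1⟩ δ hδ ⟨C, hC⟩
    set e : EuclideanSpace ℝ (Fin N) := EuclideanSpace.single ⟨0, hN⟩ 1 with he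
    have hne : ‖e‖ = 1 := by rw [he, EuclideanSpace.norm_single]; norm_num
    have key : ∀ r : ℝ, 0 < r → r < δ → α ≤ C * r ^ ε := by
      intro r hr hrδ
      have hnre : ‖r • e‖ = r := by
        rw [norm_smul, hne, Real.norm_eq_abs, abs_of_pos hr, mul_one]
      have hx : (r • e) ∈ ball (0 : EuclideanSpace ℝ (Fin N)) δ := by
        rw [mem_ball_zero_iff, hnre]; exact hrδ
      have h0 : (0 : EuclideanSpace ℝ (Fin N)) ∈ ball (0 : EuclideanSpace ℝ (Fin N)) δ :=
        mem_ball_self hδ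
      have hineq := hC (r • e) hx 0 h0
      rw [hgeq, hgeq] at hineq
      simp only [smul_zero, sub_zero, hnre] at hineq
      rw [norm_smul, hnre, Real.norm_eq_abs,
        abs_of_pos (by positivity : 0 < α * r ^ (β-1))] at hineq
      have hl : α * r ^ (β-1) * r = α * r ^ β := by
        rw [mul_assoc, ← Real.rpow_add_one (ne_of_gt hr)]; ring_nf
      have hrr : r ^ (β + ε) = r ^ β * r ^ ε := Real.rpow_add hr β ε
      rw [hl, hrr] at hineq
      have hrβ : (0:ℝ) < r ^ β := rpow_pos_of_pos hr β
      have : α * r ^ β ≤ C * r ^ ε * r ^ β := by linarith [hineq]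
      exact le_of_mul_le_mul_right this hrβ
    rcases le_or_gt C 0 with hCle | hCpos
    · have h := key (δ/2) (by linarith) (by linarith)
      have hpos : (0:ℝ) < (δ/2) ^ ε := rpow_pos_of_pos (by linarith) ε
      nlinarith
    · set r := min (δ/2) ((α/(2*C)) ^ (1/ε)) with hrdef
      have hr0 : 0 < r := lt_min (by linarith) (rpow_pos_of_pos (by positivity) _)
      have hrδ : r < δ := lt_of_le_of_lt (min_le_left _ _) (by linarith)
      have h := key r hr0 hrδ
      have hrε : r ^ ε ≤ α/(2*C) := by
        calc r ^ ε ≤ ((α/(2*C)) ^ (1/ε)) ^ ε :=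
              Real.rpow_le_rpow hr0.le (min_le_right _ _) hε0.le
          _ = α/(2*C) := by
              rw [← Real.rpow_mul (by positivity), one_div,
                inv_mul_cancel₀ (ne_of_gt hε0), Real.rpow_one]
      have hfin : C * r ^ ε ≤ α/2 := by
        calc C * r ^ ε ≤ C * (α/(2*C)) := by gcongr
          _ = α/2 := by field_simp
      linarith
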